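/- Let g = T_{01}T_{02}^3 + T_{11}^3 + T_{21}^2 and R = K[T_{01},T_{02},T_{11},T_{21}]/(g) over an algebraically closed field K of characteristic zero. Then the derivation δ of R defined on generators by δ(T_{01}) = 3T_{11}^2, δ(T_{02}) = 0, δ(T_{11}) = -T_{02}^3, δ(T_{21}) = 0 is a well-defined locally nilpotent derivation of R. -/

import Mathlib

open MvPolynomial

set_option synthInstance.maxHeartbeats 1000000
set_option maxHeartbeats 1000000

/-- The trinomial `g = T₀₁T₀₂³ + T₁₁³ + T₂₁²`, with variables
`X 0 = T₀₁`, `X 1 = T₀₂`, `X 2 = T₁₁`, `X 3 = T₂₁`. -/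
noncomputable def g7 (K : Type*) [Field K] : MvPolynomial (Fin 4) K :=
  X 0 * X 1 ^ 3 + X 2 ^ 3 + X 3 ^ 2

/-- The trinomial algebra `R(g) = K[T₀₁,T₀₂,T₁₁,T₂₁]/(g)`. -/
abbrev R7 (K : Type*) [Field K] : Type _ :=
  MvPolynomial (Fin 4) K ⧸ Ideal.span {g7 K}

noncomputable def D7 (K : Type*) [Field K] :
    Derivation K (MvPolynomial (Fin 4) K) (MvPolynomial (Fin 4) K) :=
  mkDerivation K ![C 3 * X 2 ^ 2, 0, -(X 1 ^ 3), 0]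

lemma D7_X0 (K : Type*) [Field K] : D7 K (X 0) = C 3 * X 2 ^ 2 := mkDerivation_X _ _ _
lemma D7_X1 (K : Type*) [Field K] : D7 K (X 1) = 0 := mkDerivation_X _ _ _
lemma D7_X2 (K : Type*) [Field K] : D7 K (X 2) = -(X 1 ^ 3) := mkDerivation_X _ _ _
lemma D7_X3 (K : Type*) [Field K] : D7 K (X 3) = 0 := mkDerivation_X _ _ _

lemma D7_g7 (K : Type*) [Field K] : D7 K (g7 K) = 0 := by
  simp [g7, Derivation.leibniz, Derivation.leibniz_pow, D7_X0, D7_X1, D7_X2, D7_X3,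
    smul_eq_mul, map_ofNat]
  ring

lemma D7_mem (K : Type*) [Field K] {p : MvPolynomial (Fin 4) K}
    (hp : p ∈ Ideal.span {g7 K}) : D7 K p ∈ Ideal.span {g7 K} := by
  rw [Ideal.mem_span_singleton'] at hp ⊢
  obtain ⟨q, rfl⟩ := hp
  exact ⟨D7 K q, by simp [Derivation.leibniz, D7_g7, smul_eq_mul, mul_comm]⟩

noncomputable def L7 (K : Type*) [Field K] : R7 K →ₗ[K] R7 K :=
  (Submodule.liftQ ((Ideal.span {g7 K}).restrictScalars K)
      ((Ideal.Quotient.mkₐ K (Ideal.span {g7 K})).toLinearMap ∘ₗ (D7 K).toLinearMap)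
      (fun p hp => by
        simp only [LinearMap.mem_ker, LinearMap.comp_apply, Derivation.coeFn_coe,
          AlgHom.toLinearMap_apply, Ideal.Quotient.mkₐ_eq_mk]
        rw [Ideal.Quotient.eq_zero_iff_mem]
        exact D7_mem K hp)).comp
    (Submodule.Quotient.restrictScalarsEquiv K (Ideal.span {g7 K})).symm.toLinearMap

lemma L7_mk (K : Type*) [Field K] (p : MvPolynomial (Fin 4) K) :
    L7 K (Ideal.Quotient.mk (Ideal.span {g7 K}) p) =
      Ideal.Quotient.mk (Ideal.span {g7 K}) (D7 K p) := rfl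

noncomputable def δ7 (K : Type*) [Field K] : Derivation K (R7 K) (R7 K) where
  toLinearMap := L7 K
  map_one_eq_zero' := by
    have : (1 : R7 K) = Ideal.Quotient.mk (Ideal.span {g7 K}) 1 := rfl
    rw [this, L7_mk]; simp
  leibniz' := by
    intro a b
    obtain ⟨p, rfl⟩ := Ideal.Quotient.mk_surjective a
    obtain ⟨q, rfl⟩ := Ideal.Quotient.mk_surjective b
    rw [← map_mul, L7_mk, L7_mk, L7_mk, Derivation.leibniz]
    simp [smul_eq_mul, mul_comm]

lemma pow_succ_apply {R A : Type*} [CommRing R] [CommRing A] [Algebra R A]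
    (D : Derivation R A A) (n : ℕ) (a : A) :
    (D.toLinearMap ^ (n + 1)) a = (D.toLinearMap ^ n) (D a) := by
  rw [pow_succ, Module.End.mul_apply]; rfl

lemma iter_nilp_mul {R A : Type*} [CommRing R] [CommRing A] [Algebra R A]
    (D : Derivation R A A) :
    ∀ n m (a b : A), (D.toLinearMap ^ n) a = 0 → (D.toLinearMap ^ m) b = 0 →
      (D.toLinearMap ^ (n + m)) (a * b) = 0 := by
  intro n
  induction n with
  | zero =>
    intro m a b ha hb
    rw [pow_zero, Module.End.one_apply] at ha
    subst ha; rw [zero_mul]; exact map_zero _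
  | succ n ihn =>
    intro m
    induction m with
    | zero =>
      intro a b ha hb
      rw [pow_zero, Module.End.one_apply] at hb
      subst hb; rw [mul_zero]; exact map_zero _
    | succ m ihm =>
      intro a b ha hb
      have key : n + 1 + (m + 1) = (n + 1 + m) + 1 := by ring
      rw [key, pow_succ_apply, Derivation.leibniz, map_add, smul_eq_mul, smul_eq_mul]
      have h1 : (D.toLinearMap ^ (n + 1 + m)) (a * D b) = 0 := by
        apply ihm a (D b) ha
        rw [← pow_succ_apply]; exact hb
      have h2 : (D.toLinearMap ^ (n + 1 + m)) (b * D a) = 0 := by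
        have : n + 1 + m = n + (m + 1) := by ring
        rw [this, mul_comm]
        apply ihn (m + 1) (D a) b _ hb
        rw [← pow_succ_apply]; exact ha
      rw [h1, h2, add_zero]

lemma iter_nilp_add {R A : Type*} [CommRing R] [CommRing A] [Algebra R A]
    (D : Derivation R A A) {n m : ℕ} {a b : A}
    (ha : (D.toLinearMap ^ n) a = 0) (hb : (D.toLinearMap ^ m) b = 0) :
    (D.toLinearMap ^ (n + m)) (a + b) = 0 := by
  rw [map_add]
  have h1 : (D.toLinearMap ^ (n + m)) a = 0 := by
    rw [add_comm, pow_add, Module.End.mul_apply, ha, map_zero]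
  have h2 : (D.toLinearMap ^ (n + m)) b = 0 := by
    rw [pow_add, Module.End.mul_apply, hb, map_zero]
  rw [h1, h2, add_zero]


lemma δ7_mk (K : Type*) [Field K] (p : MvPolynomial (Fin 4) K) :
    δ7 K (Ideal.Quotient.mk (Ideal.span {g7 K}) p) =
      Ideal.Quotient.mk (Ideal.span {g7 K}) (D7 K p) := rfl

lemma δ7_X1 (K : Type*) [Field K] :
    δ7 K (Ideal.Quotient.mk (Ideal.span {g7 K}) (X 1)) = 0 := by
  rw [δ7_mk, D7_X1, map_zero]

lemma δ7_X3 (K : Type*) [Field K] :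
    δ7 K (Ideal.Quotient.mk (Ideal.span {g7 K}) (X 3)) = 0 := by
  rw [δ7_mk, D7_X3, map_zero]

lemma δ7_pow2_X2 (K : Type*) [Field K] :
    ((δ7 K).toLinearMap ^ 2) (Ideal.Quotient.mk (Ideal.span {g7 K}) (X 2)) = 0 := by
  show ((δ7 K).toLinearMap ^ (1 + 1)) _ = 0
  rw [pow_succ_apply, pow_one]
  show δ7 K (δ7 K _) = 0
  rw [δ7_mk, D7_X2, δ7_mk]
  have : D7 K (-(X 1 ^ 3)) = 0 := by
    simp [Derivation.leibniz_pow, D7_X1]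
  rw [this, map_zero]

/-- There is a (necessarily unique) derivation `δ` of `R = K[T₀₁,T₀₂,T₁₁,T₂₁]/(g)` with
`δ(T₀₁) = 3T₁₁²`, `δ(T₀₂) = 0`, `δ(T₁₁) = -T₀₂³`, `δ(T₂₁) = 0`, and it is locally
nilpotent. -/
theorem exists_lnd_on_trinomial_1332_typeII_two (K : Type*) [Field K] [IsAlgClosed K]
    [CharZero K] :
    ∃ δ : Derivation K (R7 K) (R7 K),
      δ (Ideal.Quotient.mk (Ideal.span {g7 K}) (X 0)) =
          Ideal.Quotient.mk (Ideal.span {g7 K}) (C 3 * X 2 ^ 2) ∧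
      δ (Ideal.Quotient.mk (Ideal.span {g7 K}) (X 1)) = 0 ∧
      δ (Ideal.Quotient.mk (Ideal.span {g7 K}) (X 2)) =
          Ideal.Quotient.mk (Ideal.span {g7 K}) (-(X 1 ^ 3)) ∧
      δ (Ideal.Quotient.mk (Ideal.span {g7 K}) (X 3)) = 0 ∧
      ∀ f, ∃ m : ℕ, (δ.toLinearMap ^ m) f = 0 := by
  refine ⟨δ7 K, by rw [δ7_mk, D7_X0], δ7_X1 K, by rw [δ7_mk, D7_X2], δ7_X3 K, ?_⟩
  -- generator facts
  have hx2 : ((δ7 K).toLinearMap ^ 2)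
      (Ideal.Quotient.mk (Ideal.span {g7 K}) (X 2)) = 0 := δ7_pow2_X2 K
  have hx0 : ((δ7 K).toLinearMap ^ 5)
      (Ideal.Quotient.mk (Ideal.span {g7 K}) (X 0)) = 0 := by
    show ((δ7 K).toLinearMap ^ (4 + 1)) _ = 0
    rw [pow_succ_apply, δ7_mk, D7_X0]
    have e : (Ideal.Quotient.mk (Ideal.span {g7 K}) (C 3 * X 2 ^ 2) : R7 K) =
        (3 : K) • (Ideal.Quotient.mk (Ideal.span {g7 K}) (X 2) *
          Ideal.Quotient.mk (Ideal.span {g7 K}) (X 2)) := by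
      erw [Algebra.smul_def (A := R7 K) (3 : K), ← map_mul, ← pow_two,
        show (algebraMap K (R7 K)) 3 = Ideal.Quotient.mk (Ideal.span {g7 K}) (C 3) from rfl,
        ← map_mul]
    rw [e, map_smul]
    have h4 : ((δ7 K).toLinearMap ^ (2 + 2))
        (Ideal.Quotient.mk (Ideal.span {g7 K}) (X 2) *
          Ideal.Quotient.mk (Ideal.span {g7 K}) (X 2)) = 0 :=
      iter_nilp_mul (δ7 K) 2 2 _ _ hx2 hx2
    rw [h4, smul_zero]
  -- reduce to adjoin induction
  intro f
  have htop : Algebra.adjoin K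
      (Set.range fun i => Ideal.Quotient.mk (Ideal.span {g7 K}) (X i)) = ⊤ := by
    have hr : (Set.range fun i => Ideal.Quotient.mk (Ideal.span {g7 K}) (X i)) =
        (Ideal.Quotient.mkₐ K (Ideal.span {g7 K})) ''
          Set.range (X : Fin 4 → MvPolynomial (Fin 4) K) := by
      rw [← Set.range_comp]
      rfl
    rw [hr, ← AlgHom.map_adjoin, MvPolynomial.adjoin_range_X, Algebra.map_top,
      AlgHom.range_eq_top]
    exact Ideal.Quotient.mkₐ_surjective K _
  have hf : f ∈ Algebra.adjoin K
      (Set.range fun i => Ideal.Quotient.mk (Ideal.span {g7 K}) (X i)) := by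
    rw [htop]; trivial
  refine Algebra.adjoin_induction (p := fun x _ => ∃ m : ℕ, ((δ7 K).toLinearMap ^ m) x = 0)
    ?_ ?_ ?_ ?_ hf
  · rintro x ⟨i, rfl⟩
    fin_cases i
    · exact ⟨5, hx0⟩
    · exact ⟨1, by rw [pow_one]; exact δ7_X1 K⟩
    · exact ⟨2, hx2⟩
    · exact ⟨1, by rw [pow_one]; exact δ7_X3 K⟩
  · intro r
    exact ⟨1, by rw [pow_one]; exact Derivation.map_algebraMap _ r⟩
  · rintro x y _ _ ⟨n, hn⟩ ⟨m, hm⟩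
    exact ⟨n + m, iter_nilp_add (δ7 K) hn hm⟩
  · rintro x y _ _ ⟨n, hn⟩ ⟨m, hm⟩
    exact ⟨n + m, iter_nilp_mul (δ7 K) n m x y hn hm⟩
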